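/- For any real 0 < q < 1, indeterminate value x with |x| small (or as formal power series in x), positive integers m ≤ n, the telescoping identity holds: (q^m/([m]_q − q^m x)) · C(m,n,q,x) = ∑_{a=m}^{n} C(m,a,q,x) · q^a/([a]_q − q^a x), where C(m,n,q,x) := (-1)^{m-1} q^{m(m+1)/2} · ∏_{h=1}^{n}([h]_q − q^h x) / ([m]_q! [n−m]_q!). -/

import Mathlib

noncomputable def qint (q : ℝ) (m : ℕ) : ℝ := (1 - q ^ m) / (1 - q)

noncomputable def qfact (q : ℝ) (m : ℕ) : ℝ := ∏ a ∈ Finset.Icc 1 m, qint q a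

/-- The connector `C(m,n,q,x)`. -/
noncomputable def connector (q : ℝ) (m n : ℕ) (x : ℝ) : ℝ :=
  (-1 : ℝ) ^ (m - 1) * q ^ (m * (m + 1) / 2) *
    (∏ h ∈ Finset.Icc 1 n, (qint q h - q ^ h * x)) / (qfact q m * qfact q (n - m))

lemma qint_pos {q : ℝ} (hq0 : 0 < q) (hq1 : q < 1) {k : ℕ} (hk : 0 < k) :
    0 < qint q k := by
  have h1 : q ^ k < 1 := pow_lt_one₀ hq0.le hq1 hk.ne'
  exact div_pos (by linarith) (by linarith)

lemma qfact_pos {q : ℝ} (hq0 : 0 < q) (hq1 : q < 1) (k : ℕ) : 0 < qfact q k := by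
  refine Finset.prod_pos fun a ha => qint_pos hq0 hq1 ?_
  exact (Finset.mem_Icc.mp ha).1

theorem connector_telescoping_right (q : ℝ) (hq0 : 0 < q) (hq1 : q < 1) (m n : ℕ)
    (hm : 0 < m) (hmn : m ≤ n) (x : ℝ)
    (hx : ∀ h ∈ Finset.Icc 1 n, qint q h - q ^ h * x ≠ 0) :
    q ^ m / (qint q m - q ^ m * x) * connector q m n x =
      ∑ a ∈ Finset.Icc m n, connector q m a x * (q ^ a / (qint q a - q ^ a * x)) := by
  induction n with
  | zero => omega
  | succ n ih =>
    rcases eq_or_lt_of_le hmn with heq | hlt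
    · subst heq
      rw [Finset.Icc_self, Finset.sum_singleton, mul_comm]
    · have hmn' : m ≤ n := Nat.lt_succ_iff.mp hlt
      have hx' : ∀ h ∈ Finset.Icc 1 n, qint q h - q ^ h * x ≠ 0 := fun h hh =>
        hx h (Finset.mem_Icc.mpr ⟨(Finset.mem_Icc.mp hh).1, (Finset.mem_Icc.mp hh).2.trans (Nat.le_succ n)⟩)
      have ih' := ih hmn' hx'
      rw [Finset.sum_Icc_succ_top (hmn'.trans (Nat.le_succ n)), ← ih']
      -- algebraic step
      have hDm : qint q m - q ^ m * x ≠ 0 :=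
        hx m (Finset.mem_Icc.mpr ⟨hm, hmn⟩)
      have hDn1 : qint q (n + 1) - q ^ (n + 1) * x ≠ 0 :=
        hx (n + 1) (Finset.mem_Icc.mpr ⟨Nat.succ_pos n, le_refl _⟩)
      have hFm : qfact q m ≠ 0 := (qfact_pos hq0 hq1 m).ne'
      have hFnm : qfact q (n - m) ≠ 0 := (qfact_pos hq0 hq1 (n - m)).ne'
      have hL : qint q (n + 1 - m) ≠ 0 :=
        (qint_pos hq0 hq1 (by omega)).ne'
      have hP1 : ∏ h ∈ Finset.Icc 1 (n + 1), (qint q h - q ^ h * x) =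
          (∏ h ∈ Finset.Icc 1 n, (qint q h - q ^ h * x)) * (qint q (n + 1) - q ^ (n + 1) * x) :=
        Finset.prod_Icc_succ_top (Nat.succ_le_succ (Nat.zero_le n)) _
      have hF1 : qfact q (n + 1 - m) = qfact q (n - m) * qint q (n + 1 - m) := by
        have h2 : n + 1 - m = (n - m) + 1 := by omega
        rw [h2, qfact, qfact, Finset.prod_Icc_succ_top (Nat.succ_le_succ (Nat.zero_le _))]
      have hqpow : q ^ (n + 1 - m) * q ^ m = q ^ (n + 1) := by
        rw [← pow_add]; congr 1; omega
      have hD : qint q (n + 1) - q ^ (n + 1) * x =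
          qint q (n + 1 - m) + q ^ (n + 1 - m) * (qint q m - q ^ m * x) := by
        have hne : (1 : ℝ) - q ≠ 0 := by linarith
        have h3 : qint q (n + 1) = qint q (n + 1 - m) + q ^ (n + 1 - m) * qint q m := by
          rw [qint, qint, qint]
          field_simp
          linear_combination hqpow
        rw [h3, ← hqpow]; ring
      simp only [connector, hP1, hF1]
      set A := qint q m with hA
      set L := qint q (n + 1 - m) with hLdef
      set P := ∏ h ∈ Finset.Icc 1 n, (qint q h - q ^ h * x) with hPdef
      set K := (-1 : ℝ) ^ (m - 1) * q ^ (m * (m + 1) / 2) with hKdef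
      have hDn1' : L + q ^ (n + 1 - m) * (A - q ^ m * x) ≠ 0 := hD ▸ hDn1
      rw [hD, ← hqpow]
      have hDn1'' : L + (A - q ^ m * x) * q ^ (n + 1 - m) ≠ 0 := by
        convert hDn1' using 1; ring
      field_simp
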